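/- Let D be a Dedekind domain and H a congruence subgroup of SL₂(D) with level l(H) = 𝔮₁·𝔮₂, where 𝔮₁ + 𝔮₂ = D. Then the subgroup K = (H ∩ SL₂(D,𝔮₁))·SL₂(D,𝔮₂) of SL₂(D) has level l(K) = 𝔮₂. -/

import Mathlib

open Matrix

open Pointwise

/-- The translation matrix `T(r) = [[1, r], [0, 1]]` in `SL₂(R)`. -/
def Tm (R : Type*) [CommRing R] (r : R) : Matrix.SpecialLinearGroup (Fin 2) R :=
  ⟨!![1, r; 0, 1], by simp [Matrix.det_fin_two_of]⟩

/-- The principal congruence subgroup `SL₂(R, 𝔮)`, the kernel of reduction mod `𝔮`. -/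
def SLmod (R : Type*) [CommRing R] (q : Ideal R) :
    Subgroup (Matrix.SpecialLinearGroup (Fin 2) R) :=
  (Matrix.SpecialLinearGroup.map (Ideal.Quotient.mk q)).ker

/-- `H` is a congruence subgroup: it contains a principal congruence subgroup of
nonzero level. -/
def IsCongruence {R : Type*} [CommRing R]
    (H : Subgroup (Matrix.SpecialLinearGroup (Fin 2) R)) : Prop :=
  ∃ q : Ideal R, q ≠ ⊥ ∧ SLmod R q ≤ H

/-- `q` is the level `l(H)` of `H`: the largest ideal all of whose associated translations
lie in the normal core of `H` (equivalently, the largest ideal contained in the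
quasi-level of `H`). -/
def IsLevel {R : Type*} [CommRing R]
    (H : Subgroup (Matrix.SpecialLinearGroup (Fin 2) R)) (q : Ideal R) : Prop :=
  (∀ r ∈ q, Tm R r ∈ H.normalCore) ∧
    ∀ I : Ideal R, (∀ r ∈ I, Tm R r ∈ H.normalCore) → I ≤ q

section Auxiliary

set_option linter.unusedTactic false
set_option linter.unreachableTactic false
set_option linter.unnecessarySeqFocus false

/-- The lower-triangular translation matrix. -/
def Lm (R : Type*) [CommRing R] (r : R) : Matrix.SpecialLinearGroup (Fin 2) R :=
  ⟨!![1, 0; r, 1], by simp [Matrix.det_fin_two_of]⟩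

/-- The Weyl element. -/
def Wm (R : Type*) [CommRing R] : Matrix.SpecialLinearGroup (Fin 2) R :=
  ⟨!![0, -1; 1, 0], by simp [Matrix.det_fin_two_of]⟩

variable {R : Type*} [CommRing R]

@[simp] lemma Tm_coe (r : R) : (Tm R r : Matrix (Fin 2) (Fin 2) R) = !![1, r; 0, 1] := rfl
@[simp] lemma Lm_coe (r : R) : (Lm R r : Matrix (Fin 2) (Fin 2) R) = !![1, 0; r, 1] := rfl

instance SLmod_normal (q : Ideal R) : (SLmod R q).Normal := MonoidHom.normal_ker _

lemma mem_SLmod_iff {q : Ideal R} {X : Matrix.SpecialLinearGroup (Fin 2) R} :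
    X ∈ SLmod R q ↔ ∀ i j, X.1 i j - (1 : Matrix (Fin 2) (Fin 2) R) i j ∈ q := by
  have : X ∈ SLmod R q ↔ (Matrix.SpecialLinearGroup.map (Ideal.Quotient.mk q)) X = 1 :=
    Iff.rfl
  rw [this]
  refine (Subtype.ext_iff).trans ?_
  rw [Matrix.SpecialLinearGroup.map_apply_coe, Matrix.SpecialLinearGroup.coe_one]
  constructor
  · intro h i j
    have := congrFun (congrFun h i) j
    simp only [RingHom.mapMatrix_apply, Matrix.map_apply] at this
    rw [← sub_eq_zero] at this
    rw [← Ideal.Quotient.eq_zero_iff_mem]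
    simpa [Matrix.one_apply] using this
  · intro h
    ext i j
    have := h i j
    rw [← Ideal.Quotient.eq_zero_iff_mem, map_sub, sub_eq_zero] at this
    simpa [Matrix.one_apply, apply_ite] using this

lemma Tm_mul (a b : R) : Tm R a * Tm R b = Tm R (a + b) := by
  have : (Tm R a * Tm R b).1 = (Tm R (a+b)).1 := by
    rw [Matrix.SpecialLinearGroup.coe_mul]
    show (!![1, a; 0, 1] : Matrix (Fin 2) (Fin 2) R) * !![1, b; 0, 1] = _
    rw [Matrix.mul_fin_two]
    ext i j
    fin_cases i <;> fin_cases j <;> simp [Tm] <;> ring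
  exact Subtype.ext this

lemma Tm_zero : Tm R 0 = 1 := by
  ext i j
  fin_cases i <;> fin_cases j <;> simp [Tm]

lemma Tm_inv (a : R) : (Tm R a)⁻¹ = Tm R (-a) := by
  rw [eq_comm, eq_inv_iff_mul_eq_one, Tm_mul, neg_add_cancel, Tm_zero]

lemma Lm_mul (a b : R) : Lm R a * Lm R b = Lm R (a + b) := by
  have : (Lm R a * Lm R b).1 = (Lm R (a+b)).1 := by
    rw [Matrix.SpecialLinearGroup.coe_mul]
    show (!![1, 0; a, 1] : Matrix (Fin 2) (Fin 2) R) * !![1, 0; b, 1] = _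
    rw [Matrix.mul_fin_two]
    ext i j
    fin_cases i <;> fin_cases j <;> simp [Lm] <;> ring
  exact Subtype.ext this
lemma Lm_zero : Lm R 0 = 1 := by
  ext i j; fin_cases i <;> fin_cases j <;> simp [Lm]
lemma Lm_inv (a : R) : (Lm R a)⁻¹ = Lm R (-a) := by
  rw [eq_comm, eq_inv_iff_mul_eq_one, Lm_mul, neg_add_cancel, Lm_zero]


lemma Tm_mem_SLmod {q : Ideal R} {r : R} (h : r ∈ q) : Tm R r ∈ SLmod R q := by
  rw [mem_SLmod_iff]
  intro i j
  fin_cases i <;> fin_cases j <;> simp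
  exact h

lemma SLmod_mono {q q' : Ideal R} (h : q ≤ q') : SLmod R q ≤ SLmod R q' := fun X hX =>
  mem_SLmod_iff.mpr fun i j => h (mem_SLmod_iff.mp hX i j)

lemma crt_exists {D : Type*} [CommRing D] (q : Ideal D) (T : Finset (Ideal D))
    (hmax : ∀ P ∈ T, P.IsMaximal) (hq : ∀ P ∈ T, ¬ q ≤ P) (t : Ideal D → D) :
    ∃ x ∈ q, ∀ P ∈ T, x - t P ∈ P := by
  classical
  induction T using Finset.induction_on with
  | empty => exact ⟨0, q.zero_mem, by simp⟩
  | @insert P₀ T' hP₀ ih =>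
    obtain ⟨x', hx'q, hx'⟩ := ih (fun P hP => hmax P (Finset.mem_insert_of_mem hP))
      (fun P hP => hq P (Finset.mem_insert_of_mem hP))
    have hmaxP₀ := hmax P₀ (Finset.mem_insert_self _ _)
    have hco : IsCoprime (q * ∏ P ∈ T', P) P₀ := by
      apply IsCoprime.mul_left
      · rw [Ideal.isCoprime_iff_sup_eq]
        refine hmaxP₀.1.2 _ (lt_of_le_of_ne le_sup_right ?_)
        intro h
        exact hq P₀ (Finset.mem_insert_self _ _) (h ▸ le_sup_left)
      · rw [← Finset.prod_attach]
        apply IsCoprime.prod_left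
        intro P _
        have hPmax := hmax P.1 (Finset.mem_insert_of_mem P.2)
        have hne : P.1 ≠ P₀ := fun h => hP₀ (h ▸ P.2)
        exact Ideal.isCoprime_iff_sup_eq.mpr (Ideal.IsMaximal.coprime_of_ne hPmax hmaxP₀ hne)
    rw [Ideal.isCoprime_iff_sup_eq] at hco
    have h1 : (1 : D) ∈ (q * ∏ P ∈ T', P) ⊔ P₀ := hco ▸ Submodule.mem_top
    obtain ⟨a, haA, b, hbP, hab⟩ := Submodule.mem_sup.mp h1
    refine ⟨x' * b + t P₀ * a, ?_, ?_⟩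
    · have hxx : x' * b + t P₀ * a - x' = (t P₀ - x') * a := by linear_combination x' * hab
      have : x' * b + t P₀ * a - x' ∈ q := hxx ▸ q.mul_mem_left _ (Ideal.mul_le_left haA)
      simpa using q.add_mem this hx'q
    · intro P hP
      rcases Finset.mem_insert.mp hP with rfl | hP'
      · have : x' * b + t P * a - t P = (x' - t P) * b := by linear_combination (t P) * hab
        exact this ▸ P.mul_mem_left _ hbP
      · have h2 : x' * b + t P₀ * a - x' ∈ P := by
          have hxx : x' * b + t P₀ * a - x' = (t P₀ - x') * a := by linear_combination x' * hab
          rw [hxx]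
          refine P.mul_mem_left _ ?_
          have : (∏ P ∈ T', P : Ideal D) ≤ P :=
            Ideal.le_of_dvd (Finset.dvd_prod_of_mem id hP')
          exact this (Ideal.mul_le_right haA)
        have := P.add_mem h2 (hx' P hP')
        simpa [sub_add_sub_cancel] using this

lemma exists_coprime_translate {D : Type*} [CommRing D] [IsDomain D] [IsDedekindDomain D]
    (q J : Ideal D) (hJ : J ≠ ⊥) {α c s t0 : D} (hα : α - 1 ∈ q) (h1 : s * α + t0 * c = 1) :
    ∃ x ∈ q, Ideal.span {α + x * c} ⊔ J = ⊤ := by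
  classical
  have hdvd : {P : Ideal D | P ∣ J}.Finite := by
    haveI := UniqueFactorizationMonoid.fintypeSubtypeDvd J (by simpa using hJ)
    have : Finite {P : Ideal D // P ∣ J} := Finite.of_fintype _
    exact Set.finite_coe_iff.mp this
  have hSsub : {P : Ideal D | P.IsPrime ∧ J ≤ P ∧ ¬ q ≤ P} ⊆ {P : Ideal D | P ∣ J} :=
    fun P hP => Ideal.dvd_iff_le.mpr hP.2.1
  have hS : {P : Ideal D | P.IsPrime ∧ J ≤ P ∧ ¬ q ≤ P}.Finite := hdvd.subset hSsub
  set T : Finset (Ideal D) := hS.toFinset with hT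
  have hmemT : ∀ P, P ∈ T ↔ (P.IsPrime ∧ J ≤ P ∧ ¬ q ≤ P) := by
    intro P; rw [hT, Set.Finite.mem_toFinset]; rfl
  have hmax : ∀ P ∈ T, P.IsMaximal := by
    intro P hP
    obtain ⟨hprime, hJP, -⟩ := (hmemT P).mp hP
    refine Ideal.IsPrime.isMaximal hprime ?_
    intro hbot
    exact hJ (le_bot_iff.mp (hbot ▸ hJP))
  obtain ⟨x, hxq, hx⟩ := crt_exists q T (hmax) (fun P hP => ((hmemT P).mp hP).2.2)
    (fun P => if α ∈ P then 1 else 0)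
  refine ⟨x, hxq, ?_⟩
  by_contra hne
  obtain ⟨m, hm, hle⟩ := Ideal.exists_le_maximal _ hne
  have hαxc : α + x * c ∈ m := by
    refine hle ?_
    exact le_sup_left (a := Ideal.span {α + x * c}) (Ideal.subset_span rfl)
  have hJm : J ≤ m := le_trans le_sup_right hle
  by_cases hqm : q ≤ m
  · refine hm.ne_top (Ideal.eq_top_iff_one _ |>.mpr ?_)
    have h2 : α - 1 ∈ m := hqm hα
    have h3 : x * c ∈ m := m.mul_mem_right _ (hqm hxq)
    have : (1 : D) = (α + x * c) - (α - 1) - x * c := by ring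
    rw [this]
    exact m.sub_mem (m.sub_mem hαxc h2) h3
  · have hmT : m ∈ T := (hmemT m).mpr ⟨hm.isPrime, hJm, hqm⟩
    have hxm := hx m hmT
    by_cases hαm : α ∈ m
    · rw [if_pos hαm] at hxm
      have hxcm : x * c ∈ m := by
        have : x * c = (α + x * c) - α := by ring
        rw [this]; exact m.sub_mem hαxc hαm
      have hcm : c ∈ m := by
        have : c = x * c - (x - 1) * c := by ring
        rw [this]; exact m.sub_mem hxcm (m.mul_mem_right _ hxm)
      refine hm.ne_top (Ideal.eq_top_iff_one _ |>.mpr ?_)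
      rw [← h1]
      exact m.add_mem (m.mul_mem_left _ hαm) (m.mul_mem_left _ hcm)
    · rw [if_neg hαm] at hxm
      rw [sub_zero] at hxm
      refine hαm ?_
      have : α = (α + x * c) - x * c := by ring
      rw [this]
      exact m.sub_mem hαxc (m.mul_mem_right _ hxm)

lemma Lm_eq_conj (s : R) : Lm R s = Wm R * Tm R (-s) * (Wm R)⁻¹ := by
  apply Subtype.ext
  rw [Matrix.SpecialLinearGroup.coe_mul, Matrix.SpecialLinearGroup.coe_mul,
    Matrix.SpecialLinearGroup.coe_inv]
  show (Lm R s : Matrix (Fin 2) (Fin 2) R) = !![0,-1;1,0] * !![1,-s;0,1] * adjugate !![0,-1;1,0]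
  rw [Matrix.adjugate_fin_two_of, Matrix.mul_fin_two, Matrix.mul_fin_two]
  ext i j
  fin_cases i <;> fin_cases j <;> simp

lemma key_lemma {D : Type*} [CommRing D] [IsDomain D] [IsDedekindDomain D]
    (N : Subgroup (Matrix.SpecialLinearGroup (Fin 2) D)) (hN : N.Normal) (q p : Ideal D)
    (hq0 : q ≠ ⊥) (hp0 : p ≠ ⊥) (hT : ∀ t ∈ q, Tm D t ∈ N)
    (hSL : SLmod D (q * p) ≤ N) : SLmod D q ≤ N := by
  have hLmN : ∀ s ∈ q, Lm D s ∈ N := by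
    intro s hs
    rw [Lm_eq_conj]
    exact hN.conj_mem _ (hT (-s) (neg_mem hs)) _
  intro M hM
  have hmem := mem_SLmod_iff.mp hM
  set a := M.1 0 0 with ha_def
  set b := M.1 0 1 with hb_def
  set c := M.1 1 0 with hc_def
  set d := M.1 1 1 with hd_def
  have hA : M.1 = !![a, b; c, d] := Matrix.eta_fin_two M.1
  have ha : a - 1 ∈ q := by simpa using hmem 0 0
  have hb : b ∈ q := by simpa using hmem 0 1
  have hc : c ∈ q := by simpa using hmem 1 0
  have hd : d - 1 ∈ q := by simpa using hmem 1 1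
  have hdet : a * d - b * c = 1 := by
    have h2 := M.2
    rw [Matrix.det_fin_two] at h2
    exact h2
  have hqp0 : q * p ≠ ⊥ := by
    rw [Ne, Ideal.mul_eq_bot]
    tauto
  have h1 : d * a + (-b) * c = 1 := by linear_combination hdet
  obtain ⟨x, hxq, hcop⟩ := exists_coprime_translate q (q * p) hqp0 ha h1
  have h1' : (1 : D) ∈ Ideal.span {a + x * c} ⊔ q * p := by rw [hcop]; trivial
  obtain ⟨s, hs, t, ht, hst⟩ := Submodule.mem_sup.mp h1'
  obtain ⟨v, hv⟩ := Ideal.mem_span_singleton'.mp hs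
  set α := a + x * c - 1 with hα_def
  have hαq : α ∈ q := by
    have e : α = (a - 1) + x * c := by rw [hα_def]; ring
    rw [e]; exact add_mem ha (q.mul_mem_left x hc)
  have hW : (1 + α) * v - 1 ∈ q * p := by
    have e : (1 + α) * v - 1 = -t := by rw [hα_def]; linear_combination hv + hst
    rw [e]; exact neg_mem ht
  set y := -(v * c) with hy_def
  set z := -(v * (b + x * d)) with hz_def
  -- the approximate diagonal element
  set X := Tm D α * (Tm D 1 * Lm D (α * v) * Tm D (-1)) *
      (Tm D 1 * Lm D (-1) * Tm D α * (Lm D 1 * Tm D (-1))) with hX_def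
  have hXN : X ∈ N := by
    have h2 : Tm D 1 * Lm D (α * v) * Tm D (-1) ∈ N := by
      have h := hN.conj_mem _ (hLmN (α * v) (q.mul_mem_right v hαq)) (Tm D 1)
      rwa [Tm_inv] at h
    have h3 : Tm D 1 * Lm D (-1) * Tm D α * (Lm D 1 * Tm D (-1)) ∈ N := by
      have h := hN.conj_mem _ (hT α hαq) (Tm D 1 * Lm D (-1))
      have e : (Tm D 1 * Lm D (-1)) * Tm D α * (Tm D 1 * Lm D (-1))⁻¹
          = Tm D 1 * Lm D (-1) * Tm D α * (Lm D 1 * Tm D (-1)) := by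
        rw [_root_.mul_inv_rev, Tm_inv, Lm_inv]; norm_num
      rwa [e] at h
    exact mul_mem (mul_mem (hT α hαq) h2) h3
  have hXcoe : (X : Matrix (Fin 2) (Fin 2) D) =
      !![(1 + α) + (α + α^2) * ((1 + α) * v - 1), -(α * ((1 + α) * v - 1));
         α * ((1 + α) * v - 1), v - ((1 + α) * v - 1)] := by
    rw [hX_def]
    simp only [Matrix.SpecialLinearGroup.coe_mul, Tm_coe, Lm_coe, Matrix.mul_fin_two]
    ext i j
    fin_cases i <;> fin_cases j <;> simp <;> ring
  set M₃ := Lm D y * Tm D x * M * Tm D z with hM₃_def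
  set b₃ := b + x * d + (1 + α) * z with hb₃_def
  set c₂ := c + y * (1 + α) with hc₂_def
  set δ₃ := d + y * (b + x * d) + c₂ * z with hδ₃_def
  have hM₃coe : (M₃ : Matrix (Fin 2) (Fin 2) D) = !![1 + α, b₃; c₂, δ₃] := by
    rw [hM₃_def]
    simp only [Matrix.SpecialLinearGroup.coe_mul, Tm_coe, Lm_coe]
    rw [hA]
    simp only [Matrix.mul_fin_two]
    ext i j
    fin_cases i <;> fin_cases j <;>
      simp only [hb₃_def, hc₂_def, hδ₃_def, hα_def, Matrix.cons_val', Matrix.cons_val_zero,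
        Matrix.cons_val_one, Matrix.head_cons, Matrix.empty_val', Matrix.cons_val_fin_one,
        Matrix.head_fin_const, Matrix.of_apply] <;> ring
  have hb₃ : b₃ ∈ q * p := by
    have e : b₃ = -((b + x * d) * ((1 + α) * v - 1)) := by rw [hb₃_def, hz_def]; ring
    rw [e]; exact neg_mem (Ideal.mul_mem_left _ _ hW)
  have hc₂ : c₂ ∈ q * p := by
    have e : c₂ = -(c * ((1 + α) * v - 1)) := by rw [hc₂_def, hy_def]; ring
    rw [e]; exact neg_mem (Ideal.mul_mem_left _ _ hW)
  have hdet3 : (1 + α) * δ₃ - b₃ * c₂ = 1 := by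
    have h2 := M₃.2
    rw [hM₃coe, Matrix.det_fin_two_of] at h2
    linear_combination h2
  have hδ₃ : δ₃ - v ∈ q * p := by
    have e : δ₃ - v = v * (b₃ * c₂) - v * ((1 + α) * v - 1) - ((1 + α) * v - 1) * (δ₃ - v) := by
      linear_combination v * hdet3
    rw [e]
    exact sub_mem (sub_mem (Ideal.mul_mem_left _ _ (Ideal.mul_mem_right _ _ hb₃))
      (Ideal.mul_mem_left _ _ hW)) (Ideal.mul_mem_right _ _ hW)
  set F := X⁻¹ * M₃ with hF_def
  have hFcoe : (F : Matrix (Fin 2) (Fin 2) D) =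
      !![v - ((1 + α) * v - 1), α * ((1 + α) * v - 1);
         -(α * ((1 + α) * v - 1)), (1 + α) + (α + α^2) * ((1 + α) * v - 1)] *
      !![1 + α, b₃; c₂, δ₃] := by
    rw [hF_def, Matrix.SpecialLinearGroup.coe_mul, Matrix.SpecialLinearGroup.coe_inv, hXcoe,
      hM₃coe, Matrix.adjugate_fin_two_of]
    congr 1
    ext i j
    fin_cases i <;> fin_cases j <;> simp <;> ring
  have hFmem : F ∈ SLmod D (q * p) := by
    rw [mem_SLmod_iff]
    intro i j
    rw [hFcoe, Matrix.mul_fin_two]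
    fin_cases i <;> fin_cases j <;> simp
    · -- (0,0) entry
      have e : (v - ((1 + α) * v - 1)) * (1 + α) + α * ((1 + α) * v - 1) * c₂ - 1
          = (α * c₂ - α) * ((1 + α) * v - 1) := by ring
      rw [e]; exact Ideal.mul_mem_left _ _ hW
    · -- (0,1) entry
      have e : (v - ((1 + α) * v - 1)) * b₃ + α * ((1 + α) * v - 1) * δ₃
          = (v - ((1 + α) * v - 1)) * b₃ + (α * δ₃) * ((1 + α) * v - 1) := by ring
      rw [e]
      exact add_mem (Ideal.mul_mem_left _ _ hb₃) (Ideal.mul_mem_left _ _ hW)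
    · -- (1,0) entry
      have e : -(α * ((1 + α) * v - 1) * (1 + α)) + (1 + α + (α + α ^ 2) * ((1 + α) * v - 1)) * c₂
          = (-(α * (1 + α))) * ((1 + α) * v - 1)
            + ((1 + α) + (α + α^2) * ((1 + α) * v - 1)) * c₂ := by ring
      rw [e]
      exact add_mem (Ideal.mul_mem_left _ _ hW) (Ideal.mul_mem_left _ _ hc₂)
    · -- (1,1) entry
      have e : -(α * ((1 + α) * v - 1) * b₃) + (1 + α + (α + α ^ 2) * ((1 + α) * v - 1)) * δ₃ - 1
          = (-(α * b₃) + (α + α^2) * δ₃) * ((1 + α) * v - 1) + b₃ * c₂ := by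
        linear_combination hdet3
      rw [e]
      exact add_mem (Ideal.mul_mem_left _ _ hW) (Ideal.mul_mem_right _ _ hb₃)
  have hFN : F ∈ N := hSL hFmem
  have hMeq : (Tm D x)⁻¹ * ((Lm D y)⁻¹ * (X * F * (Tm D z)⁻¹)) = M := by
    rw [hF_def, hM₃_def]
    group
  rw [← hMeq]
  refine mul_mem ?_ (mul_mem ?_ (mul_mem (mul_mem hXN hFN) ?_))
  · rw [Tm_inv]; exact hT _ (neg_mem hxq)
  · rw [Lm_inv]
    refine hLmN _ ?_
    have e : -y = v * c := by rw [hy_def]; ring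
    rw [e]; exact q.mul_mem_left v hc
  · rw [Tm_inv]
    refine hT _ ?_
    have e : -z = v * (b + x * d) := by rw [hz_def]; ring
    rw [e]
    exact q.mul_mem_left v (add_mem hb (q.mul_mem_right d hxq))

end Auxiliary

/-- Lemma 4.3. Let `H` be a congruence subgroup of `SL₂(D)` of level
`q₁·q₂` with `q₁ + q₂ = D`. Then the subgroup `(H ∩ SL₂(D,q₁)) · SL₂(D,q₂)` has level
`q₂`. -/
theorem statement11 {D : Type*} [CommRing D] [IsDomain D] [IsDedekindDomain D]
    (H : Subgroup (Matrix.SpecialLinearGroup (Fin 2) D)) (hH : IsCongruence H)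
    (q₁ q₂ : Ideal D) (hlevel : IsLevel H (q₁ * q₂)) (hco : q₁ ⊔ q₂ = ⊤) :
    IsLevel ((H ⊓ SLmod D q₁) ⊔ SLmod D q₂) q₂ := by
  classical
  constructor
  · intro r hr
    exact fun g => (le_sup_right : SLmod D q₂ ≤ (H ⊓ SLmod D q₁) ⊔ SLmod D q₂)
      ((SLmod_normal q₂).conj_mem _ (Tm_mem_SLmod hr) g)
  · intro I hI
    obtain ⟨q', hq'0, hq'H⟩ := hH
    have hq'core : SLmod D q' ≤ H.normalCore := Subgroup.normal_le_normalCore.mpr hq'H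
    have hq'T : ∀ t ∈ q', Tm D t ∈ H.normalCore := fun t ht => hq'core (Tm_mem_SLmod ht)
    have hq'le : q' ≤ q₁ * q₂ := hlevel.2 q' hq'T
    have h120 : q₁ * q₂ ≠ ⊥ := fun h => hq'0 (le_bot_iff.mp (h ▸ hq'le))
    have hSLcore : SLmod D (q₁ * q₂) ≤ H.normalCore := by
      refine key_lemma _ inferInstance (q₁ * q₂) q' h120 hq'0 hlevel.1 ?_
      exact le_trans (SLmod_mono Ideal.mul_le_right) hq'core
    have h1T : (1 : D) ∈ q₁ ⊔ q₂ := hco ▸ trivial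
    obtain ⟨a, haq₁, b, hbq₂, hab⟩ := Submodule.mem_sup.mp h1T
    have hinf : q₁ * q₂ = q₁ ⊓ q₂ := Ideal.mul_eq_inf_of_coprime hco
    have hkey : ∀ r' ∈ I, Tm D (a * r') ∈ H.normalCore := by
      intro r' hr'
      have hTm : Tm D (a * r') ∈ ((H ⊓ SLmod D q₁) ⊔ SLmod D q₂).normalCore :=
        hI _ (I.mul_mem_left a hr')
      intro g
      have hg : g * Tm D (a * r') * g⁻¹ ∈ (H ⊓ SLmod D q₁) ⊔ SLmod D q₂ :=
        Subgroup.normalCore_le _ (Subgroup.normalCore_normal _ |>.conj_mem _ hTm g)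
      have hg' : g * Tm D (a * r') * g⁻¹ ∈
          (↑(H ⊓ SLmod D q₁) : Set (Matrix.SpecialLinearGroup (Fin 2) D)) *
          (↑(SLmod D q₂) : Set (Matrix.SpecialLinearGroup (Fin 2) D)) := by
        rw [← Subgroup.mul_normal]
        exact hg
      obtain ⟨h, hh, zz, hzz, hprod⟩ := Set.mem_mul.mp hg'
      have hhmem : h ∈ H ⊓ SLmod D q₁ := SetLike.mem_coe.mp hh
      have hzzmem : zz ∈ SLmod D q₂ := SetLike.mem_coe.mp hzz
      have hq₁mem : g * Tm D (a * r') * g⁻¹ ∈ SLmod D q₁ :=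
        (SLmod_normal q₁).conj_mem _ (Tm_mem_SLmod (q₁.mul_mem_right r' haq₁)) g
      have hzz1 : zz ∈ SLmod D q₁ := by
        have e : zz = h⁻¹ * (g * Tm D (a * r') * g⁻¹) := by rw [← hprod]; group
        rw [e]
        exact (SLmod D q₁).mul_mem (inv_mem (Subgroup.mem_inf.mp hhmem).2) hq₁mem
      have hzz12 : zz ∈ SLmod D (q₁ * q₂) := by
        rw [hinf, mem_SLmod_iff]
        intro i j
        exact Submodule.mem_inf.mpr
          ⟨mem_SLmod_iff.mp hzz1 i j, mem_SLmod_iff.mp hzzmem i j⟩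
      have hzzH : zz ∈ H := H.normalCore_le (hSLcore hzz12)
      rw [← hprod]
      exact H.mul_mem (Subgroup.mem_inf.mp hhmem).1 hzzH
    have hspan : Ideal.span {a} * I ≤ q₁ * q₂ := by
      refine hlevel.2 _ ?_
      intro t ht
      obtain ⟨r', hr', rfl⟩ := Ideal.mem_span_singleton_mul.mp ht
      exact hkey r' hr'
    intro r hr
    have h1 : a * r ∈ q₂ := Ideal.mul_le_right
      (hspan (Ideal.mul_mem_mul (Ideal.subset_span rfl) hr))
    have h2 : b * r ∈ q₂ := q₂.mul_mem_right r hbq₂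
    have e : r = a * r + b * r := by linear_combination (-r) * hab
    rw [e]
    exact q₂.add_mem h1 h2
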